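/- Let p ≥ 2 be an integer and r a real number with 0 < r < 1. Let w, w' ∈ ℝ^p satisfy wᵢ ≥ 0 and w'ᵢ ≥ 0 for all i, Σᵢ wᵢ = Σᵢ w'ᵢ = 1, and Σᵢ wᵢ² < Σᵢ (w'ᵢ)². Then Q(w,r) < Q(w',r); that is, at any fixed multicollinearity level r, the variance of the group effect estimator is a strictly increasing function of the distance δ = p·Σᵢwᵢ² − 1 between the weight vector and the uniform weight vector. -/

import Mathlib

open Matrix

/-- The `p × p` Gram/correlation matrix of a uniform model at multicollinearity
level `r`: diagonal entries `1`, off-diagonal entries `r`. -/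
noncomputable def unifMat (p : ℕ) (r : ℝ) : Matrix (Fin p) (Fin p) ℝ :=
  fun i j => if i = j then 1 else r

/-- `Q(w,r) = wᵀ A(p,r)⁻¹ w`. -/
noncomputable def Qform (p : ℕ) (r : ℝ) (w : Fin p → ℝ) : ℝ :=
  w ⬝ᵥ (unifMat p r)⁻¹.mulVec w

lemma unifMat_inv (p : ℕ) (hp : 2 ≤ p) (r : ℝ) (hr0 : 0 < r) (hr1 : r < 1) :
    (unifMat p r)⁻¹ = Matrix.of (fun i j => if i = j then
      (1 + ((p:ℝ) - 2) * r) / ((1 - r) * (1 + ((p:ℝ) - 1) * r)) else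
      (-r) / ((1 - r) * (1 + ((p:ℝ) - 1) * r))) := by
  have hp2 : (2:ℝ) ≤ (p:ℝ) := by exact_mod_cast hp
  have h1r : (0:ℝ) < 1 - r := by linarith
  have h2 : (0:ℝ) < 1 + ((p:ℝ) - 1) * r := by nlinarith
  have hD : (1 - r) * (1 + ((p:ℝ) - 1) * r) ≠ 0 := by positivity
  apply inv_eq_right_inv
  ext i k
  set D := (1 - r) * (1 + ((p:ℝ) - 1) * r) with hDdef
  set a := (1 + ((p:ℝ) - 2) * r) / D with ha
  set b := (-r) / D with hb
  simp only [Matrix.mul_apply, unifMat, Matrix.of_apply, Matrix.one_apply]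
  have key : ∀ j : Fin p, (if i = j then (1:ℝ) else r) * (if j = k then a else b)
      = (if i = j then (1 - r) * (if j = k then (a - b) else 0) else 0)
        + (if i = j then ((1 - r) * b) else 0) + (if j = k then (r * (a - b)) else 0)
        + r * b := by
    intro j
    split_ifs <;> ring
  rw [Finset.sum_congr rfl fun j _ => key j]
  simp only [Finset.sum_add_distrib, Finset.sum_ite_eq, Finset.sum_ite_eq',
    Finset.mem_univ, if_true, Finset.sum_const, Finset.card_univ, Fintype.card_fin,
    nsmul_eq_mul]
  by_cases hik : i = k
  · simp only [hik, if_pos rfl, ha, hb, hDdef]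
    simp only [eq_self_iff_true, if_true]
    field_simp
    have h3 : (1 - r + r * (p:ℝ)) ≠ 0 := (by nlinarith : (0:ℝ) < 1 - r + r * p).ne'
    linear_combination (1 - r) * inv_mul_cancel₀ h3
  · simp only [if_neg hik, ha, hb, hDdef]
    field_simp
    ring

/-- among nonnegative weight vectors summing to 1, the variance
`Q(·,r)` is strictly increasing in `Σᵢ wᵢ²` (equivalently in the distance
`δ = p·Σᵢ wᵢ² − 1` from the uniform weight vector). -/
theorem Qform_strict_mono_in_sumsq (p : ℕ) (hp : 2 ≤ p) (r : ℝ)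
    (hr0 : 0 < r) (hr1 : r < 1) (w w' : Fin p → ℝ)
    (hw0 : ∀ i, 0 ≤ w i) (hw'0 : ∀ i, 0 ≤ w' i)
    (hw1 : (∑ i, w i) = 1) (hw'1 : (∑ i, w' i) = 1)
    (hlt : (∑ i, (w i) ^ 2) < ∑ i, (w' i) ^ 2) :
    Qform p r w < Qform p r w' := by
  have hp2 : (2:ℝ) ≤ (p:ℝ) := by exact_mod_cast hp
  have h1r : (0:ℝ) < 1 - r := by linarith
  have h2 : (0:ℝ) < 1 + ((p:ℝ) - 1) * r := by nlinarith
  have hD : (0:ℝ) < (1 - r) * (1 + ((p:ℝ) - 1) * r) := by positivity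
  set D := (1 - r) * (1 + ((p:ℝ) - 1) * r) with hDdef
  set a := (1 + ((p:ℝ) - 2) * r) / D with ha
  set b := (-r) / D with hb
  have hQ : ∀ v : Fin p → ℝ, (∑ i, v i) = 1 →
      Qform p r v = (a - b) * (∑ i, (v i) ^ 2) + b := by
    intro v hv
    unfold Qform
    rw [unifMat_inv p hp r hr0 hr1]
    have hrow : ∀ i, ((Matrix.of (fun i j => if i = j then a else b)).mulVec v) i
        = (a - b) * v i + b := by
      intro i
      simp only [Matrix.mulVec, dotProduct, Matrix.of_apply]
      have : ∀ j : Fin p, (if i = j then a else b) * v j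
          = (if i = j then ((a - b) * v j) else 0) + b * v j := by
        intro j; by_cases h : i = j <;> simp [h] <;> ring
      rw [Finset.sum_congr rfl fun j _ => this j, Finset.sum_add_distrib,
        Finset.sum_ite_eq]
      simp [← Finset.mul_sum, hv]
    simp only [dotProduct]
    rw [Finset.sum_congr rfl fun i _ => by rw [hrow i]]
    have : ∀ i : Fin p, v i * ((a - b) * v i + b) = (a - b) * (v i) ^ 2 + b * v i := by
      intro i; ring
    rw [Finset.sum_congr rfl fun i _ => this i, Finset.sum_add_distrib,
      ← Finset.mul_sum, ← Finset.mul_sum, hv, mul_one]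
  rw [hQ w hw1, hQ w' hw'1]
  have hab : 0 < a - b := by
    rw [ha, hb, div_sub_div_same]
    apply div_pos _ hD
    nlinarith
  have := mul_lt_mul_of_pos_left hlt hab
  linarith
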